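/- Let F be a tree of finite subsets of ℕ, M an infinite subset of ℕ, and k a natural number. Then there exists an infinite subset L of M such that either [L]^k ⊆ F, or F ∩ [L]^{<ω} ⊆ {s : |s| < k}, i.e., every element of F contained in L has fewer than k elements. -/
import Mathlib

/-- Infinite Ramsey theorem for 2 colors on `k`-subsets of an infinite subset of `ℕ`. -/
theorem ramsey_inf (k : ℕ) (c : Finset ℕ → Bool) (M : Set ℕ) (hM : M.Infinite) :
    ∃ L ⊆ M, L.Infinite ∧ ∃ v : Bool, ∀ s : Finset ℕ, ↑s ⊆ L → s.card = k → c s = v := by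
  induction k generalizing c M with
  | zero =>
    refine ⟨M, subset_rfl, hM, c ∅, fun s _ hs => ?_⟩
    rw [Finset.card_eq_zero] at hs; subst hs; rfl
  | succ k IH =>
    have key : ∀ S : Set ℕ, S.Infinite → ∃ T : Set ℕ,
        T ⊆ S ∧ T.Infinite ∧ (∀ x ∈ T, sInf S < x) ∧
        ∃ v : Bool, ∀ s : Finset ℕ, ↑s ⊆ T → s.card = k → c (insert (sInf S) s) = v := by
      intro S hS
      have hinf : ({x ∈ S | sInf S < x}).Infinite := by
        have : {x ∈ S | sInf S < x} = S \ {x | x ≤ sInf S} := by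
          ext x; simp [not_le]
        rw [this]
        exact hS.diff (Set.finite_le_nat _)
      obtain ⟨L, hLsub, hLinf, v, hv⟩ := IH (fun s => c (insert (sInf S) s)) _ hinf
      exact ⟨L, fun x hx => (hLsub hx).1, hLinf, fun x hx => (hLsub hx).2, v, hv⟩
    choose T hT1 hT2 hT3 v hv using key
    let Mseq : ℕ → {S : Set ℕ // S.Infinite} := fun n =>
      Nat.rec ⟨M, hM⟩ (fun _ p => ⟨T p.1 p.2, hT2 p.1 p.2⟩) n
    set A : ℕ → ℕ := fun n => sInf (Mseq n).1 with hA
    have hstep : ∀ n, (Mseq (n+1)).1 = T (Mseq n).1 (Mseq n).2 := fun n => rfl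
    have hsub : ∀ n, (Mseq (n+1)).1 ⊆ (Mseq n).1 := fun n => hT1 _ _
    have hmono : ∀ m n, m ≤ n → (Mseq n).1 ⊆ (Mseq m).1 := by
      intro m n h
      induction n with
      | zero => simp_all
      | succ n ih =>
        rcases Nat.lt_or_ge m (n+1) with h' | h'
        · exact (ih (Nat.lt_succ_iff.mp h')).trans' (hsub n)
        · have : m = n + 1 := le_antisymm h h'
          subst this; exact subset_rfl
    have hAmem : ∀ n, A n ∈ (Mseq n).1 := fun n => Nat.sInf_mem (Mseq n).2.nonempty
    have hgt : ∀ n, ∀ x ∈ (Mseq (n+1)).1, A n < x := fun n => hT3 _ _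
    have hAstrict : StrictMono A :=
      strictMono_nat_of_lt_succ fun n => hgt n _ (hAmem (n+1))
    -- pigeonhole on colors
    set B : ℕ → Bool := fun n => v (Mseq n).1 (Mseq n).2 with hB
    have hBcolor : ∀ n, ∀ s : Finset ℕ, ↑s ⊆ (Mseq (n+1)).1 → s.card = k →
        c (insert (A n) s) = B n := by
      intro n s hs hcard
      exact hv (Mseq n).1 (Mseq n).2 s (by rwa [hstep] at hs) hcard
    obtain ⟨w, hI⟩ : ∃ w : Bool, {n | B n = w}.Infinite := by
      by_cases h : {n | B n = true}.Infinite
      · exact ⟨true, h⟩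
      · refine ⟨false, ?_⟩
        have := (Set.not_infinite.mp h).infinite_compl
        convert this using 1
        ext n; simp [Bool.not_eq_true]
    refine ⟨A '' {n | B n = w}, ?_, hI.image (hAstrict.injective.injOn), w, ?_⟩
    · rintro x ⟨n, _, rfl⟩
      exact hmono 0 n (Nat.zero_le n) (hAmem n)
    · intro s hs hcard
      have hne : s.Nonempty := Finset.card_pos.mp (by omega)
      obtain ⟨n, hnI, hnm⟩ : ∃ n, B n = w ∧ A n = s.min' hne := hs (s.min'_mem hne)
      have herase : ↑(s.erase (s.min' hne)) ⊆ (Mseq (n+1)).1 := by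
        intro x hx
        simp only [Finset.coe_erase, Set.mem_diff] at hx
        obtain ⟨hxs, hxm⟩ := hx
        obtain ⟨j, _, rfl⟩ := hs hxs
        have hlt : A n < A j := lt_of_le_of_ne (hnm ▸ s.min'_le _ hxs) (by
          intro h; exact hxm (by rw [← h, hnm]; exact Set.mem_singleton _))
        have hj : n + 1 ≤ j := hAstrict.lt_iff_lt.mp hlt
        exact hmono (n+1) j hj (hAmem j)
      have hcarde : (s.erase (s.min' hne)).card = k := by
        rw [Finset.card_erase_of_mem (s.min'_mem hne)]; omega
      have := hBcolor n _ herase hcarde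
      rwa [hnm, Finset.insert_erase (s.min'_mem hne), hnI] at this

/-- Every finset has an initial segment of any size up to its cardinality. -/
theorem exists_initSeg' (s : Finset ℕ) : ∀ n, n ≤ s.card →
    ∃ t : Finset ℕ, (t ⊆ s ∧ ∀ a ∈ t, ∀ b ∈ s, b ∉ t → a < b) ∧ t.card = n := by
  intro n
  induction n with
  | zero => exact fun _ => ⟨∅, ⟨Finset.empty_subset s, by simp⟩, rfl⟩
  | succ n ih =>
    intro hn
    obtain ⟨t, ⟨hts, hord⟩, hcard⟩ := ih (by omega)
    have hne : (s \ t).Nonempty := by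
      rw [← Finset.card_pos, Finset.card_sdiff_of_subset hts]; omega
    set m := (s \ t).min' hne with hm
    have hmmem : m ∈ s \ t := (s \ t).min'_mem hne
    have hms : m ∈ s := (Finset.mem_sdiff.mp hmmem).1
    have hmt : m ∉ t := (Finset.mem_sdiff.mp hmmem).2
    refine ⟨insert m t, ⟨Finset.insert_subset hms hts, ?_⟩,
      by rw [Finset.card_insert_of_notMem hmt, hcard]⟩
    intro a ha b hb hbn
    have hbt : b ∉ t := fun h => hbn (Finset.mem_insert_of_mem h)
    rcases Finset.mem_insert.mp ha with rfl | hat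
    · have hble : m ≤ b := (s \ t).min'_le b (Finset.mem_sdiff.mpr ⟨hb, hbt⟩)
      exact lt_of_le_of_ne hble (fun h => hbn (h ▸ Finset.mem_insert_self m t))
    · exact hord a hat b hb hbt

/-- `s` is an initial segment of `t`. -/
def InitSeg (s t : Finset ℕ) : Prop :=
  s ⊆ t ∧ ∀ a ∈ s, ∀ b ∈ t, b ∉ s → a < b

/-- `F` is a tree: it contains `∅` and is closed under taking initial segments. -/
def IsTree (F : Set (Finset ℕ)) : Prop :=
  ∅ ∈ F ∧ ∀ t ∈ F, ∀ s : Finset ℕ, InitSeg s t → s ∈ F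

/-- Proposition 3.1 for `ξ = k`: for a tree `F` there is an infinite `L ⊆ M` such that either
every `k`-element subset of `L` is in `F`, or every element of `F` contained in `L` has fewer
than `k` elements. -/
theorem tree_dichotomy_finite (F : Set (Finset ℕ)) (hF : IsTree F)
    (M : Set ℕ) (hM : M.Infinite) (k : ℕ) :
    ∃ L ⊆ M, L.Infinite ∧
      ((∀ s : Finset ℕ, ↑s ⊆ L → s.card = k → s ∈ F) ∨
       (∀ s ∈ F, ↑s ⊆ L → s.card < k)) := by
  classical
  obtain ⟨L, hLM, hLinf, v, hv⟩ :=
    ramsey_inf k (fun s => decide (s ∈ F)) M hM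
  refine ⟨L, hLM, hLinf, ?_⟩
  cases v with
  | true =>
    left
    intro s hs hcard
    have := hv s hs hcard
    simpa using this
  | false =>
    right
    intro s hsF hs
    by_contra h
    push_neg at h
    obtain ⟨t, ⟨hts, hord⟩, hcard⟩ := exists_initSeg' s k h
    have htF : t ∈ F := hF.2 s hsF t ⟨hts, hord⟩
    have := hv t ((Finset.coe_subset.mpr hts).trans hs) hcard
    simp [htF] at this
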